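/- If V(a)<+∞ for some a>0, then there exists a₀>0 such that for every a with 0<a≤a₀, Problem (P_a) admits an optimal solution, unique up to almost sure equality. -/

import Mathlib

open MeasureTheory Filter Set
open scoped ENNReal

noncomputable def Vval {Ω : Type*} [MeasurableSpace Ω] (P : Measure Ω)
    (ξ : Ω → ℝ) (u : ℝ → ℝ) (a : ℝ) : ℝ≥0∞ :=
  ⨆ (X : Ω → ℝ) (_ : Measurable X) (_ : ∀ᵐ ω ∂P, 0 ≤ X ω)
    (_ : ∫⁻ ω, ENNReal.ofReal (X ω * ξ ω) ∂P = ENNReal.ofReal a),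
    ∫⁻ ω, ENNReal.ofReal (u (X ω)) ∂P

/-- `X` is an optimal solution of Problem (P_a): it is feasible (measurable,
nonnegative a.s., satisfying the budget constraint `E[Xξ] = a`) and its expected
utility dominates that of every feasible solution. -/
def IsOptimal {Ω : Type*} [MeasurableSpace Ω] (P : Measure Ω)
    (ξ : Ω → ℝ) (u : ℝ → ℝ) (a : ℝ) (X : Ω → ℝ) : Prop :=
  Measurable X ∧ (∀ᵐ ω ∂P, 0 ≤ X ω) ∧
    (∫⁻ ω, ENNReal.ofReal (X ω * ξ ω) ∂P = ENNReal.ofReal a) ∧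
    ∀ Y : Ω → ℝ, Measurable Y → (∀ᵐ ω ∂P, 0 ≤ Y ω) →
      (∫⁻ ω, ENNReal.ofReal (Y ω * ξ ω) ∂P = ENNReal.ofReal a) →
      ∫⁻ ω, ENNReal.ofReal (u (Y ω)) ∂P ≤ ∫⁻ ω, ENNReal.ofReal (u (X ω)) ∂P

/-- `fLag P ξ I lam = E[I(λξ)ξ]`, the function whose equation `f(λ) = a`
determines the Lagrange multiplier. -/
noncomputable def fLag {Ω : Type*} [MeasurableSpace Ω] (P : Measure Ω)
    (ξ : Ω → ℝ) (I : ℝ → ℝ) (lam : ℝ) : ℝ≥0∞ :=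
  ∫⁻ ω, ENNReal.ofReal (I (lam * ξ ω) * ξ ω) ∂P


section Tangent

variable {u u' : ℝ → ℝ}

/-- right secant is below the derivative -/
lemma sec_le_deriv (hu_conc : StrictConcaveOn ℝ (Set.Ici (0:ℝ)) u)
    (hu_deriv : ∀ x : ℝ, 0 < x → HasDerivAt u (u' x) x)
    {x y : ℝ} (hx : 0 < x) (hxy : x < y) : (u y - u x) / (y - x) ≤ u' x := by
  have ht : Tendsto (slope u x) (nhdsWithin x (Set.Ioi x)) (nhds (u' x)) :=
    (hasDerivAt_iff_tendsto_slope.mp (hu_deriv x hx)).mono_left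
      (nhdsWithin_mono x fun z hz => Set.mem_compl_singleton_iff.mpr (ne_of_gt hz))
  refine ge_of_tendsto ht ?_
  filter_upwards [Ioo_mem_nhdsGT_of_mem ⟨le_refl x, hxy⟩] with z hz
  rw [slope_def_field]
  exact le_of_lt (hu_conc.secant_strict_mono (a := x) hx.le
    (le_trans hx.le (le_of_lt hz.1)) (le_trans hx.le (le_of_lt (hxy))) hz.1.ne' hxy.ne' hz.2)

/-- derivative is below the left secant -/
lemma deriv_le_sec (hu_conc : StrictConcaveOn ℝ (Set.Ici (0:ℝ)) u)
    (hu_deriv : ∀ x : ℝ, 0 < x → HasDerivAt u (u' x) x)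
    {x y : ℝ} (hx : 0 ≤ x) (hxy : x < y) : u' y ≤ (u y - u x) / (y - x) := by
  have hy : 0 < y := lt_of_le_of_lt hx hxy
  have ht : Tendsto (slope u y) (nhdsWithin y (Set.Iio y)) (nhds (u' y)) :=
    (hasDerivAt_iff_tendsto_slope.mp (hu_deriv y hy)).mono_left
      (nhdsWithin_mono y fun z hz => Set.mem_compl_singleton_iff.mpr (ne_of_lt hz))
  refine le_of_tendsto ht ?_
  filter_upwards [Ioo_mem_nhdsLT_of_mem ⟨hxy, le_refl y⟩] with w hw
  rw [slope_def_field]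
  have h1 : (u w - u y) / (w - y) < (u x - u y) / (x - y) :=
    hu_conc.secant_strict_mono (a := y) hy.le hx (le_trans hx (le_of_lt hw.1)) hxy.ne
      hw.2.ne hw.1
  have h2 : (u x - u y) / (x - y) = (u y - u x) / (y - x) := by
    rw [← neg_sub (u y) (u x), ← neg_sub y x, neg_div_neg_eq]
  linarith

/-- strict tangent line inequality -/
lemma tangent_lt (hu_conc : StrictConcaveOn ℝ (Set.Ici (0:ℝ)) u)
    (hu_deriv : ∀ x : ℝ, 0 < x → HasDerivAt u (u' x) x)
    {x y : ℝ} (hy : 0 ≤ y) (hx : 0 < x) (hne : y ≠ x) :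
    u y < u x + u' x * (y - x) := by
  rcases lt_or_gt_of_ne hne with h | h
  · -- y < x
    set m := (y + x) / 2 with hm
    have hym : y < m := by simp only [hm]; linarith
    have hmx : m < x := by simp only [hm]; linarith
    have hm0 : 0 ≤ m := by simp only [hm]; linarith
    have h1 : u' x ≤ (u x - u m) / (x - m) := deriv_le_sec hu_conc hu_deriv hm0 hmx
    have h2 : (u m - u x) / (m - x) < (u y - u x) / (y - x) :=
      hu_conc.secant_strict_mono (a := x) hx.le hy hm0 h.ne hmx.ne hym
    have h3 : (u x - u m) / (x - m) = (u m - u x) / (m - x) := by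
      rw [← neg_sub (u m) (u x), ← neg_sub m x, neg_div_neg_eq]
    have h4 : u' x < (u y - u x) / (y - x) := by rw [h3] at h1; linarith
    have h5 : y - x < 0 := by linarith
    have h6 := (lt_div_iff_of_neg h5).mp h4
    linarith
  · -- x < y
    set m := (x + y) / 2 with hm
    have hxm : x < m := by simp only [hm]; linarith
    have hmy : m < y := by simp only [hm]; linarith
    have h1 : (u m - u x) / (m - x) ≤ u' x := sec_le_deriv hu_conc hu_deriv hx hxm
    have h2 : (u y - u x) / (y - x) < (u m - u x) / (m - x) :=
      hu_conc.secant_strict_mono (a := x) hx.le (le_trans hx.le hxm.le) hy hxm.ne' h.ne'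
        hmy
    have h4 : (u y - u x) / (y - x) < u' x := lt_of_lt_of_le h2 h1
    have h5 : 0 < y - x := by linarith
    have h6 := (div_lt_iff₀ h5).mp h4
    linarith

lemma tangent_le (hu_conc : StrictConcaveOn ℝ (Set.Ici (0:ℝ)) u)
    (hu_deriv : ∀ x : ℝ, 0 < x → HasDerivAt u (u' x) x)
    {x y : ℝ} (hy : 0 ≤ y) (hx : 0 < x) :
    u y ≤ u x + u' x * (y - x) := by
  rcases eq_or_ne y x with rfl | hne
  · simp
  · exact (tangent_lt hu_conc hu_deriv hy hx hne).le

lemma mul_deriv_lt (hu_conc : StrictConcaveOn ℝ (Set.Ici (0:ℝ)) u)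
    (hu_deriv : ∀ x : ℝ, 0 < x → HasDerivAt u (u' x) x) (hu0 : u 0 = 0)
    {x : ℝ} (hx : 0 < x) : x * u' x < u x := by
  have := tangent_lt hu_conc hu_deriv le_rfl hx hx.ne
  rw [hu0] at this
  nlinarith

lemma deriv_strictAnti (hu_conc : StrictConcaveOn ℝ (Set.Ici (0:ℝ)) u)
    (hu_deriv : ∀ x : ℝ, 0 < x → HasDerivAt u (u' x) x)
    {x y : ℝ} (hx : 0 < x) (hxy : x < y) : u' y < u' x := by
  set m := (x + y) / 2 with hm
  have hxm : x < m := by simp only [hm]; linarith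
  have hmy : m < y := by simp only [hm]; linarith
  have hm0 : 0 < m := lt_trans hx hxm
  have h1 : u' y ≤ (u y - u m) / (y - m) := deriv_le_sec hu_conc hu_deriv hm0.le hmy
  have h2 : (u y - u m) / (y - m) < (u m - u x) / (m - x) :=
    hu_conc.slope_anti_adjacent hx.le (by linarith : (0:ℝ) ≤ y) hxm hmy
  have h3 : (u m - u x) / (m - x) ≤ u' x := sec_le_deriv hu_conc hu_deriv hx hxm
  linarith

end Tangent

open Classical in
noncomputable def Iinv (u' : ℝ → ℝ) (y : ℝ) : ℝ :=
  if h : ∃ x : ℝ, 0 < x ∧ u' x = y then h.choose else 0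

section Iinv

variable {u u' u'' : ℝ → ℝ}

lemma Iinv_nonneg (u' : ℝ → ℝ) (y : ℝ) : 0 ≤ Iinv u' y := by
  unfold Iinv
  split_ifs with h
  · exact h.choose_spec.1.le
  · exact le_refl 0

lemma Iinv_spec (hu_deriv2 : ∀ x : ℝ, 0 < x → HasDerivAt u' (u'' x) x)
    (hu'_zero : Tendsto u' (nhdsWithin 0 (Set.Ioi 0)) atTop)
    (hu'_top : Tendsto u' atTop (nhds 0))
    {y : ℝ} (hy : 0 < y) : 0 < Iinv u' y ∧ u' (Iinv u' y) = y := by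
  have hex : ∃ x : ℝ, 0 < x ∧ u' x = y := by
    obtain ⟨x₁, hx₁⟩ : ∃ x₁, x₁ ∈ Set.Ioi (0:ℝ) ∧ y < u' x₁ := by
      have h1 : ∀ᶠ z in nhdsWithin 0 (Set.Ioi (0:ℝ)), y < u' z :=
        hu'_zero.eventually_gt_atTop y
      have h2 : ∀ᶠ z in nhdsWithin 0 (Set.Ioi (0:ℝ)), z ∈ Set.Ioi (0:ℝ) :=
        eventually_mem_nhdsWithin
      obtain ⟨z, hz1, hz2⟩ := (h2.and h1).exists
      exact ⟨z, hz1, hz2⟩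
    obtain ⟨x₂, hx₂⟩ : ∃ x₂, x₁ < x₂ ∧ u' x₂ < y := by
      have h1 : ∀ᶠ z in atTop, u' z < y := hu'_top.eventually_lt_const hy
      have h2 : ∀ᶠ z in atTop, x₁ < z := eventually_gt_atTop x₁
      obtain ⟨z, hz2, hz1⟩ := (h2.and h1).exists
      exact ⟨z, hz2, hz1⟩
    have hcont : ContinuousOn u' (Set.Icc x₁ x₂) := by
      intro z hz
      have hz0 : 0 < z := lt_of_lt_of_le hx₁.1 hz.1
      exact ((hu_deriv2 z hz0).continuousAt).continuousWithinAt
    have hmem : y ∈ Set.Icc (u' x₂) (u' x₁) := ⟨hx₂.2.le, hx₁.2.le⟩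
    obtain ⟨x, hx, hux⟩ := intermediate_value_Icc' hx₂.1.le hcont hmem
    exact ⟨x, lt_of_lt_of_le hx₁.1 hx.1, hux⟩
  unfold Iinv
  rw [dif_pos hex]
  exact hex.choose_spec

lemma Iinv_anti (hu_conc : StrictConcaveOn ℝ (Set.Ici (0:ℝ)) u)
    (hu_deriv : ∀ x : ℝ, 0 < x → HasDerivAt u (u' x) x)
    (hu_deriv2 : ∀ x : ℝ, 0 < x → HasDerivAt u' (u'' x) x)
    (hu'_zero : Tendsto u' (nhdsWithin 0 (Set.Ioi 0)) atTop)
    (hu'_top : Tendsto u' atTop (nhds 0))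
    {y₁ y₂ : ℝ} (hy₁ : 0 < y₁) (hy : y₁ ≤ y₂) : Iinv u' y₂ ≤ Iinv u' y₁ := by
  by_contra hlt
  push_neg at hlt
  obtain ⟨hp1, he1⟩ := Iinv_spec (u'' := u'') hu_deriv2 hu'_zero hu'_top hy₁
  obtain ⟨hp2, he2⟩ := Iinv_spec (u'' := u'') hu_deriv2 hu'_zero hu'_top
    (lt_of_lt_of_le hy₁ hy)
  have := deriv_strictAnti hu_conc hu_deriv hp1 hlt
  rw [he1, he2] at this
  linarith

lemma Iinv_lt (hu_conc : StrictConcaveOn ℝ (Set.Ici (0:ℝ)) u)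
    (hu_deriv : ∀ x : ℝ, 0 < x → HasDerivAt u (u' x) x)
    (hu_deriv2 : ∀ x : ℝ, 0 < x → HasDerivAt u' (u'' x) x)
    (hu'_pos : ∀ x : ℝ, 0 < x → 0 < u' x)
    (hu'_zero : Tendsto u' (nhdsWithin 0 (Set.Ioi 0)) atTop)
    (hu'_top : Tendsto u' atTop (nhds 0))
    {y x₁ : ℝ} (hx₁ : 0 < x₁) (hy : u' x₁ < y) : Iinv u' y < x₁ := by
  have hy0 : 0 < y := lt_trans (hu'_pos x₁ hx₁) hy
  obtain ⟨hp, he⟩ := Iinv_spec (u'' := u'') hu_deriv2 hu'_zero hu'_top hy0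
  by_contra hle
  push_neg at hle
  rcases eq_or_lt_of_le hle with heq | hlt
  · rw [heq, he] at hy; exact lt_irrefl y hy
  · have := deriv_strictAnti hu_conc hu_deriv hx₁ hlt
    rw [he] at this
    linarith

lemma lt_Iinv (hu_conc : StrictConcaveOn ℝ (Set.Ici (0:ℝ)) u)
    (hu_deriv : ∀ x : ℝ, 0 < x → HasDerivAt u (u' x) x)
    (hu_deriv2 : ∀ x : ℝ, 0 < x → HasDerivAt u' (u'' x) x)
    (hu'_zero : Tendsto u' (nhdsWithin 0 (Set.Ioi 0)) atTop)
    (hu'_top : Tendsto u' atTop (nhds 0))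
    {y x₁ : ℝ} (hx₁ : 0 < x₁) (hy0 : 0 < y) (hy : y < u' x₁) : x₁ < Iinv u' y := by
  obtain ⟨hp, he⟩ := Iinv_spec (u'' := u'') hu_deriv2 hu'_zero hu'_top hy0
  by_contra hle
  push_neg at hle
  rcases eq_or_lt_of_le hle with heq | hlt
  · rw [← heq, he] at hy; exact lt_irrefl y hy
  · have := deriv_strictAnti hu_conc hu_deriv hp hlt
    rw [he] at this
    linarith

lemma Iinv_continuousAt (hu_conc : StrictConcaveOn ℝ (Set.Ici (0:ℝ)) u)
    (hu_deriv : ∀ x : ℝ, 0 < x → HasDerivAt u (u' x) x)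
    (hu_deriv2 : ∀ x : ℝ, 0 < x → HasDerivAt u' (u'' x) x)
    (hu'_pos : ∀ x : ℝ, 0 < x → 0 < u' x)
    (hu'_zero : Tendsto u' (nhdsWithin 0 (Set.Ioi 0)) atTop)
    (hu'_top : Tendsto u' atTop (nhds 0))
    {y₀ : ℝ} (hy₀ : 0 < y₀) : ContinuousAt (Iinv u') y₀ := by
  obtain ⟨hp, he⟩ := Iinv_spec (u'' := u'') hu_deriv2 hu'_zero hu'_top hy₀
  set x₀ := Iinv u' y₀
  rw [ContinuousAt]
  rw [tendsto_order]
  constructor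
  · intro b hb
    rcases lt_or_ge b 0 with hb0 | hb0
    · exact Eventually.of_forall fun y => lt_of_lt_of_le hb0 (Iinv_nonneg u' y)
    · set x₁ := (b + x₀) / 2 with hx₁def
      have hbx₁ : b < x₁ := by simp only [hx₁def]; linarith
      have hx₁x₀ : x₁ < x₀ := by simp only [hx₁def]; linarith
      have hx₁0 : 0 < x₁ := by simp only [hx₁def]; linarith
      have hux₁ : y₀ < u' x₁ := by
        have := deriv_strictAnti hu_conc hu_deriv hx₁0 hx₁x₀
        rw [he] at this; exact this
      have hnb : Set.Ioo 0 (u' x₁) ∈ nhds y₀ := Ioo_mem_nhds hy₀ hux₁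
      filter_upwards [hnb] with y hy
      exact lt_trans hbx₁
        (lt_Iinv hu_conc hu_deriv hu_deriv2 hu'_zero hu'_top hx₁0 hy.1 hy.2)
  · intro b hb
    set x₁ := (x₀ + b) / 2 with hx₁def
    have hx₀x₁ : x₀ < x₁ := by simp only [hx₁def]; linarith
    have hx₁b : x₁ < b := by simp only [hx₁def]; linarith
    have hx₁0 : 0 < x₁ := lt_trans hp hx₀x₁
    have hux₁ : u' x₁ < y₀ := by
      have := deriv_strictAnti hu_conc hu_deriv hp hx₀x₁
      rw [he] at this; exact this
    filter_upwards [Ioi_mem_nhds hux₁] with y hy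
    exact lt_trans
      (Iinv_lt hu_conc hu_deriv hu_deriv2 hu'_pos hu'_zero hu'_top hx₁0 hy) hx₁b

lemma Iinv_measurable (hu_conc : StrictConcaveOn ℝ (Set.Ici (0:ℝ)) u)
    (hu_deriv : ∀ x : ℝ, 0 < x → HasDerivAt u (u' x) x)
    (hu_deriv2 : ∀ x : ℝ, 0 < x → HasDerivAt u' (u'' x) x)
    (hu'_pos : ∀ x : ℝ, 0 < x → 0 < u' x)
    (hu'_zero : Tendsto u' (nhdsWithin 0 (Set.Ioi 0)) atTop)
    (hu'_top : Tendsto u' atTop (nhds 0)) : Measurable (Iinv u') := by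
  apply measurable_of_Iio
  intro t
  have hsplit : Iinv u' ⁻¹' (Set.Iio t) =
      (Set.Iic 0 ∩ Iinv u' ⁻¹' (Set.Iio t)) ∪ {y | 0 < y ∧ Iinv u' y < t} := by
    ext y
    simp only [Set.mem_preimage, Set.mem_Iio, Set.mem_union, Set.mem_inter_iff,
      Set.mem_Iic, Set.mem_setOf_eq]
    constructor
    · intro h
      rcases le_or_gt y 0 with h0 | h0
      · exact Or.inl ⟨h0, h⟩
      · exact Or.inr ⟨h0, h⟩
    · rintro (⟨_, h⟩ | ⟨_, h⟩) <;> exact h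
  rw [hsplit]
  apply MeasurableSet.union
  · rcases lt_or_ge 0 t with ht | ht
    · have : Set.Iic (0:ℝ) ∩ Iinv u' ⁻¹' (Set.Iio t) = Set.Iic 0 := by
        apply Set.inter_eq_left.mpr
        intro y hy
        simp only [Set.mem_preimage, Set.mem_Iio]
        calc Iinv u' y ≤ 0 := by
              unfold Iinv
              split_ifs with h
              · exfalso
                obtain ⟨x, hx, hux⟩ := h
                have := hu'_pos x hx
                rw [hux] at this
                exact absurd (lt_of_lt_of_le this hy) (lt_irrefl 0)
              · exact le_refl 0
          _ < t := ht
      rw [this]; exact measurableSet_Iic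
    · have : Set.Iic (0:ℝ) ∩ Iinv u' ⁻¹' (Set.Iio t) = ∅ := by
        apply Set.eq_empty_of_forall_notMem
        rintro y ⟨_, hy⟩
        simp only [Set.mem_preimage, Set.mem_Iio] at hy
        exact absurd (lt_of_le_of_lt (Iinv_nonneg u' y) hy) (not_lt.mpr ht)
      rw [this]; exact MeasurableSet.empty
  · have : OrdConnected {y : ℝ | 0 < y ∧ Iinv u' y < t} := by
      constructor
      rintro y₁ ⟨hy₁0, hy₁⟩ y₂ ⟨hy₂0, hy₂⟩ z hz
      refine ⟨lt_of_lt_of_le hy₁0 hz.1, lt_of_le_of_lt ?_ hy₁⟩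
      exact Iinv_anti hu_conc hu_deriv hu_deriv2 hu'_zero hu'_top hy₁0 hz.1
    exact this.measurableSet

end Iinv

noncomputable def Vval' {Ω : Type*} [MeasurableSpace Ω] (P : Measure Ω)
    (ξ : Ω → ℝ) (u : ℝ → ℝ) (a : ℝ) : ℝ≥0∞ :=
  ⨆ (X : Ω → ℝ) (_ : Measurable X) (_ : ∀ᵐ ω ∂P, 0 ≤ X ω)
    (_ : ∫⁻ ω, ENNReal.ofReal (X ω * ξ ω) ∂P = ENNReal.ofReal a),
    ∫⁻ ω, ENNReal.ofReal (u (X ω)) ∂P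

section VvalLemmas

variable {Ω : Type*} [MeasurableSpace Ω] (P : Measure Ω) [IsProbabilityMeasure P]
variable {ξ : Ω → ℝ} {u : ℝ → ℝ}

lemma le_Vval' {a : ℝ} (X : Ω → ℝ) (hm : Measurable X) (hpos : ∀ᵐ ω ∂P, 0 ≤ X ω)
    (hbud : ∫⁻ ω, ENNReal.ofReal (X ω * ξ ω) ∂P = ENNReal.ofReal a) :
    ∫⁻ ω, ENNReal.ofReal (u (X ω)) ∂P ≤ Vval' P ξ u a := by
  unfold Vval'
  exact le_iSup_of_le X (le_iSup_of_le hm (le_iSup_of_le hpos (le_iSup_of_le hbud le_rfl)))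

lemma Vval'_mono (hξmeas : Measurable ξ) (hξpos : ∀ᵐ ω ∂P, 0 < ξ ω)
    (hu_mono : StrictMonoOn u (Set.Ici (0:ℝ)))
    {a' a : ℝ} (ha' : 0 ≤ a') (haa : a' ≤ a) :
    Vval' P ξ u a' ≤ Vval' P ξ u a := by
  unfold Vval'
  refine iSup_le fun X => iSup_le fun hm => iSup_le fun hpos => iSup_le fun hbud => ?_
  set c := a - a' with hcdef
  have hc : 0 ≤ c := by simp only [hcdef]; linarith
  set Y := fun ω => X ω + c * (ξ ω)⁻¹ with hYdef
  have hYm : Measurable Y := hm.add (measurable_const.mul hξmeas.inv)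
  have hYpos : ∀ᵐ ω ∂P, 0 ≤ Y ω := by
    filter_upwards [hpos, hξpos] with ω h1 h2
    have : 0 ≤ c * (ξ ω)⁻¹ := mul_nonneg hc (inv_nonneg.mpr h2.le)
    simp only [hYdef]; linarith
  have hYbud : ∫⁻ ω, ENNReal.ofReal (Y ω * ξ ω) ∂P = ENNReal.ofReal a := by
    have hcongr : ∀ᵐ ω ∂P, ENNReal.ofReal (Y ω * ξ ω)
        = ENNReal.ofReal (X ω * ξ ω) + ENNReal.ofReal c := by
      filter_upwards [hpos, hξpos] with ω h1 h2
      have hXξ : 0 ≤ X ω * ξ ω := mul_nonneg h1 h2.le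
      have : Y ω * ξ ω = X ω * ξ ω + c := by
        simp only [hYdef]
        field_simp
      rw [this, ENNReal.ofReal_add hXξ hc]
    rw [lintegral_congr_ae hcongr, lintegral_add_right _ measurable_const,
      lintegral_const, measure_univ, mul_one, hbud, ← ENNReal.ofReal_add ha' hc]
    congr 1
    simp only [hcdef]; ring
  calc ∫⁻ ω, ENNReal.ofReal (u (X ω)) ∂P
      ≤ ∫⁻ ω, ENNReal.ofReal (u (Y ω)) ∂P := by
        refine lintegral_mono_ae ?_
        filter_upwards [hpos, hξpos] with ω h1 h2
        have hle : X ω ≤ Y ω := by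
          have : 0 ≤ c * (ξ ω)⁻¹ := mul_nonneg hc (inv_nonneg.mpr h2.le)
          simp only [hYdef]; linarith
        exact ENNReal.ofReal_le_ofReal
          (hu_mono.monotoneOn h1 (le_trans h1 hle) hle)
    _ ≤ Vval' P ξ u a := le_Vval' P Y hYm hYpos hYbud

lemma Vval'_scale (hξmeas : Measurable ξ) (hu_meas : Measurable u) (hu0 : u 0 = 0)
    (hu_conc : StrictConcaveOn ℝ (Set.Ici (0:ℝ)) u)
    {ahat a : ℝ} (hahat : 0 < ahat) (haa : ahat ≤ a) :
    Vval' P ξ u a ≤ ENNReal.ofReal (a / ahat) * Vval' P ξ u ahat := by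
  have ha : 0 < a := lt_of_lt_of_le hahat haa
  set t := ahat / a with htdef
  have ht0 : 0 < t := div_pos hahat ha
  have ht1 : t ≤ 1 := by
    rw [htdef, div_le_one ha]; exact haa
  unfold Vval'
  refine iSup_le fun X => iSup_le fun hm => iSup_le fun hpos => iSup_le fun hbud => ?_
  set Y := fun ω => t * X ω with hYdef
  have hYm : Measurable Y := measurable_const.mul hm
  have hYpos : ∀ᵐ ω ∂P, 0 ≤ Y ω := by
    filter_upwards [hpos] with ω h1
    exact mul_nonneg ht0.le h1
  have hYbud : ∫⁻ ω, ENNReal.ofReal (Y ω * ξ ω) ∂P = ENNReal.ofReal ahat := by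
    have hcongr : ∀ ω, ENNReal.ofReal (Y ω * ξ ω)
        = ENNReal.ofReal t * ENNReal.ofReal (X ω * ξ ω) := by
      intro ω
      rw [← ENNReal.ofReal_mul ht0.le]
      congr 1
      simp only [hYdef]; ring
    simp_rw [hcongr]
    rw [lintegral_const_mul _ (by
      exact (hm.mul hξmeas).ennreal_ofReal), hbud, ← ENNReal.ofReal_mul ht0.le]
    congr 1
    rw [htdef, div_mul_cancel₀ _ ha.ne']
  have key : ENNReal.ofReal t * ∫⁻ ω, ENNReal.ofReal (u (X ω)) ∂P
      ≤ Vval' P ξ u ahat := by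
    rw [← lintegral_const_mul _ (by exact (hu_meas.comp hm).ennreal_ofReal)]
    calc ∫⁻ ω, ENNReal.ofReal t * ENNReal.ofReal (u (X ω)) ∂P
        ≤ ∫⁻ ω, ENNReal.ofReal (u (Y ω)) ∂P := by
          refine lintegral_mono_ae ?_
          filter_upwards [hpos] with ω h1
          rw [← ENNReal.ofReal_mul ht0.le]
          apply ENNReal.ofReal_le_ofReal
          have hcc := hu_conc.concaveOn.2 (Set.mem_Ici.mpr h1)
            (Set.mem_Ici.mpr (le_refl (0:ℝ))) ht0.le (by linarith : 0 ≤ 1 - t)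
            (by ring)
          simp only [smul_eq_mul, mul_zero, add_zero, hu0] at hcc
          simpa [hYdef] using hcc
      _ ≤ Vval' P ξ u ahat := le_Vval' P Y hYm hYpos hYbud
  have hmul := mul_le_mul_right key (ENNReal.ofReal (1 / t))
  rw [← mul_assoc, ← ENNReal.ofReal_mul (by positivity : (0:ℝ) ≤ 1/t)] at hmul
  rw [one_div_mul_cancel ht0.ne', ENNReal.ofReal_one, one_mul] at hmul
  have : (1 : ℝ) / t = a / ahat := by
    rw [htdef, one_div_div]
  rw [this] at hmul
  exact hmul

end VvalLemmas

section FlagBound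

variable {Ω : Type*} [MeasurableSpace Ω] (P : Measure Ω) [IsProbabilityMeasure P]
variable {ξ : Ω → ℝ} {u u' u'' : ℝ → ℝ}

lemma fLag_le (hξmeas : Measurable ξ) (hξpos : ∀ᵐ ω ∂P, 0 < ξ ω)
    (hu_meas : Measurable u) (hu0 : u 0 = 0)
    (hu_mono : StrictMonoOn u (Set.Ici (0:ℝ)))
    (hu_conc : StrictConcaveOn ℝ (Set.Ici (0:ℝ)) u)
    (hu_deriv : ∀ x : ℝ, 0 < x → HasDerivAt u (u' x) x)
    (hu_deriv2 : ∀ x : ℝ, 0 < x → HasDerivAt u' (u'' x) x)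
    (hu'_pos : ∀ x : ℝ, 0 < x → 0 < u' x)
    (hu'_zero : Tendsto u' (nhdsWithin 0 (Set.Ioi 0)) atTop)
    (hu'_top : Tendsto u' atTop (nhds 0))
    {ahat lam : ℝ} (hahat : 0 < ahat) (hVfin : Vval' P ξ u ahat ≠ ⊤)
    (hlam : (Vval' P ξ u ahat).toReal / ahat < lam) :
    ∫⁻ ω, ENNReal.ofReal (Iinv u' (lam * ξ ω) * ξ ω) ∂P
      ≤ ENNReal.ofReal ((Vval' P ξ u ahat).toReal
          / (lam - (Vval' P ξ u ahat).toReal / ahat)) := by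
  set Vr := (Vval' P ξ u ahat).toReal with hVrdef
  have hVr0 : 0 ≤ Vr := ENNReal.toReal_nonneg
  set L := Vr / ahat with hLdef
  have hL0 : 0 ≤ L := by positivity
  have hlam0 : 0 < lam := lt_of_le_of_lt hL0 hlam
  have hVreq : Vval' P ξ u ahat = ENNReal.ofReal Vr := (ENNReal.ofReal_toReal hVfin).symm
  have hIm : Measurable (Iinv u') :=
    Iinv_measurable hu_conc hu_deriv hu_deriv2 hu'_pos hu'_zero hu'_top
  -- truncations
  set A : ℕ → Set Ω := fun n => {ω | 1/(n+1 : ℝ) ≤ ξ ω ∧ ξ ω ≤ (n+1 : ℝ)} with hAdef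
  have hAmeas : ∀ n, MeasurableSet (A n) := fun n =>
    ((measurableSet_le measurable_const hξmeas).inter
      (measurableSet_le hξmeas measurable_const))
  set Xn : ℕ → Ω → ℝ := fun n ω => if ω ∈ A n then Iinv u' (lam * ξ ω) else 0 with hXdef
  have hXnm : ∀ n, Measurable (Xn n) := fun n =>
    Measurable.ite (hAmeas n) (hIm.comp (measurable_const.mul hξmeas)) measurable_const
  have hXn_nonneg : ∀ n ω, 0 ≤ Xn n ω := by
    intro n ω
    simp only [hXdef]
    split_ifs
    · exact Iinv_nonneg u' _
    · exact le_refl 0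
  have hXnbound : ∀ n ω, Xn n ω * ξ ω ≤ Iinv u' (lam * (1/(n+1 : ℝ))) * (n+1 : ℝ) := by
    intro n ω
    have hrpos : (0:ℝ) < 1/(n+1 : ℝ) := by positivity
    have hIb : 0 ≤ Iinv u' (lam * (1/(n+1 : ℝ))) := Iinv_nonneg u' _
    simp only [hXdef]
    split_ifs with hA
    · have hξω : (0:ℝ) < ξ ω := lt_of_lt_of_le hrpos hA.1
      have h1 : Iinv u' (lam * ξ ω) ≤ Iinv u' (lam * (1/(n+1 : ℝ))) := by
        apply Iinv_anti hu_conc hu_deriv hu_deriv2 hu'_zero hu'_top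
          (by positivity)
        have := hA.1
        nlinarith
      exact mul_le_mul h1 hA.2 hξω.le hIb
    · rw [zero_mul]
      positivity
  have hfin_n : ∀ n, ∫⁻ ω, ENNReal.ofReal (Xn n ω * ξ ω) ∂P ≠ ⊤ := by
    intro n
    have hle : ∫⁻ ω, ENNReal.ofReal (Xn n ω * ξ ω) ∂P
        ≤ ENNReal.ofReal (Iinv u' (lam * (1/(n+1 : ℝ))) * (n+1 : ℝ)) := by
      calc ∫⁻ ω, ENNReal.ofReal (Xn n ω * ξ ω) ∂P
          ≤ ∫⁻ _, ENNReal.ofReal (Iinv u' (lam * (1/(n+1 : ℝ))) * (n+1 : ℝ)) ∂P :=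
            lintegral_mono fun ω => ENNReal.ofReal_le_ofReal (hXnbound n ω)
        _ = ENNReal.ofReal (Iinv u' (lam * (1/(n+1 : ℝ))) * (n+1 : ℝ)) := by
            rw [lintegral_const, measure_univ, mul_one]
    exact ne_top_of_le_ne_top ENNReal.ofReal_ne_top hle
  set an : ℕ → ℝ := fun n => (∫⁻ ω, ENNReal.ofReal (Xn n ω * ξ ω) ∂P).toReal with handef
  have han0 : ∀ n, 0 ≤ an n := fun n => ENNReal.toReal_nonneg
  have hanbud : ∀ n, ∫⁻ ω, ENNReal.ofReal (Xn n ω * ξ ω) ∂P = ENNReal.ofReal (an n) :=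
    fun n => (ENNReal.ofReal_toReal (hfin_n n)).symm
  have hkey : ∀ n, ENNReal.ofReal (lam * an n) ≤ Vval' P ξ u (an n) := by
    intro n
    have step1 : ENNReal.ofReal (lam * an n)
        = ∫⁻ ω, ENNReal.ofReal (lam * (Xn n ω * ξ ω)) ∂P := by
      simp_rw [ENNReal.ofReal_mul hlam0.le]
      rw [lintegral_const_mul (f := fun ω => ENNReal.ofReal (Xn n ω * ξ ω)) _ ((hXnm n).mul hξmeas).ennreal_ofReal, hanbud n]
    have step2 : ∫⁻ ω, ENNReal.ofReal (lam * (Xn n ω * ξ ω)) ∂P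
        ≤ ∫⁻ ω, ENNReal.ofReal (u (Xn n ω)) ∂P := by
      refine lintegral_mono_ae ?_
      filter_upwards [hξpos] with ω hξω
      apply ENNReal.ofReal_le_ofReal
      simp only [hXdef]
      split_ifs with hA
      · have hlξ : 0 < lam * ξ ω := by positivity
        obtain ⟨hp, he⟩ := Iinv_spec (u'' := u'') hu_deriv2 hu'_zero hu'_top hlξ
        have := mul_deriv_lt hu_conc hu_deriv hu0 hp
        rw [he] at this
        nlinarith
      · rw [hu0, zero_mul, mul_zero]
    exact le_trans (step1 ▸ step2) (le_Vval' P (Xn n) (hXnm n)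
      (Eventually.of_forall fun ω => hXn_nonneg n ω) (hanbud n))
  have han_le : ∀ n, an n ≤ Vr / (lam - L) := by
    intro n
    have hVan : Vval' P ξ u (an n) ≤ ENNReal.ofReal (Vr + L * an n) := by
      rcases le_or_gt (an n) ahat with hc | hc
      · calc Vval' P ξ u (an n) ≤ Vval' P ξ u ahat :=
              Vval'_mono P hξmeas hξpos hu_mono (han0 n) hc
          _ = ENNReal.ofReal Vr := hVreq
          _ ≤ ENNReal.ofReal (Vr + L * an n) := by
              apply ENNReal.ofReal_le_ofReal
              nlinarith [han0 n, hL0]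
      · calc Vval' P ξ u (an n)
            ≤ ENNReal.ofReal (an n / ahat) * Vval' P ξ u ahat :=
              Vval'_scale P hξmeas hu_meas hu0 hu_conc hahat hc.le
          _ = ENNReal.ofReal (an n / ahat * Vr) := by
              rw [hVreq, ← ENNReal.ofReal_mul (by positivity)]
          _ ≤ ENNReal.ofReal (Vr + L * an n) := by
              apply ENNReal.ofReal_le_ofReal
              have : an n / ahat * Vr = L * an n := by
                rw [hLdef]; field_simp
              rw [this]; linarith
    have := le_trans (hkey n) hVan
    have hreal : lam * an n ≤ Vr + L * an n := by
      rw [ENNReal.ofReal_le_ofReal_iff (by positivity)] at this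
      exact this
    rw [le_div_iff₀ (by linarith : 0 < lam - L)]
    nlinarith
  -- monotone convergence
  have hAsub : ∀ {n m : ℕ}, n ≤ m → A n ⊆ A m := by
    intro n m hnm ω hω
    have hnm' : (n:ℝ) ≤ (m:ℝ) := Nat.cast_le.mpr hnm
    have h1 : 1/((m:ℝ)+1) ≤ 1/((n:ℝ)+1) := by
      apply one_div_le_one_div_of_le (by positivity)
      linarith
    have h2 : ((n:ℝ)+1) ≤ ((m:ℝ)+1) := by linarith
    exact ⟨le_trans h1 hω.1, le_trans hω.2 h2⟩
  have hmono : ∀ᵐ ω ∂P, Monotone fun n => ENNReal.ofReal (Xn n ω * ξ ω) := by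
    filter_upwards [hξpos] with ω hξω
    intro n m hnm
    apply ENNReal.ofReal_le_ofReal
    simp only [hXdef]
    by_cases hA : ω ∈ A n
    · rw [if_pos hA, if_pos (hAsub hnm hA)]
    · rw [if_neg hA, zero_mul]
      split_ifs with h2
      · exact mul_nonneg (Iinv_nonneg u' _) hξω.le
      · rw [zero_mul]
  have hsup : ∀ᵐ ω ∂P, (⨆ n, ENNReal.ofReal (Xn n ω * ξ ω))
      = ENNReal.ofReal (Iinv u' (lam * ξ ω) * ξ ω) := by
    filter_upwards [hξpos] with ω hξω
    obtain ⟨n₁, hn₁⟩ := exists_nat_one_div_lt hξω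
    obtain ⟨n₂, hn₂⟩ := exists_nat_ge (ξ ω)
    have hmem : ω ∈ A (max n₁ n₂) := by
      have hc0 : (n₁:ℝ) ≤ ((max n₁ n₂ : ℕ):ℝ) := Nat.cast_le.mpr (le_max_left _ _)
      have hc0' : (n₂:ℝ) ≤ ((max n₁ n₂ : ℕ):ℝ) := Nat.cast_le.mpr (le_max_right _ _)
      refine ⟨?_, by linarith⟩
      have h1 : (0:ℝ) < (n₁:ℝ)+1 := by positivity
      have := one_div_le_one_div_of_le h1 (by linarith : (n₁:ℝ)+1 ≤ ((max n₁ n₂ : ℕ):ℝ)+1)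
      linarith
    apply le_antisymm
    · refine iSup_le fun n => ENNReal.ofReal_le_ofReal ?_
      simp only [hXdef]
      split_ifs with hA
      · exact le_refl _
      · rw [zero_mul]
        exact mul_nonneg (Iinv_nonneg u' _) hξω.le
    · refine le_iSup_of_le (max n₁ n₂) ?_
      simp only [hXdef, if_pos hmem]
      exact le_refl _
  have hfeq : ∫⁻ ω, ENNReal.ofReal (Iinv u' (lam * ξ ω) * ξ ω) ∂P
      = ⨆ n, ENNReal.ofReal (an n) := by
    calc ∫⁻ ω, ENNReal.ofReal (Iinv u' (lam * ξ ω) * ξ ω) ∂P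
        = ∫⁻ ω, ⨆ n, ENNReal.ofReal (Xn n ω * ξ ω) ∂P :=
          lintegral_congr_ae (hsup.mono fun ω h => h.symm)
      _ = ⨆ n, ∫⁻ ω, ENNReal.ofReal (Xn n ω * ξ ω) ∂P :=
          lintegral_iSup' (fun n => ((hXnm n).mul hξmeas).ennreal_ofReal.aemeasurable)
            hmono
      _ = ⨆ n, ENNReal.ofReal (an n) := by
          exact iSup_congr hanbud
  rw [hfeq]
  exact iSup_le fun n => ENNReal.ofReal_le_ofReal (han_le n)

end FlagBound

section FlagCont

variable {Ω : Type*} [MeasurableSpace Ω] (P : Measure Ω) [IsProbabilityMeasure P]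
variable {ξ : Ω → ℝ} {u u' u'' : ℝ → ℝ}

lemma fLag_continuousOn (hξmeas : Measurable ξ) (hξpos : ∀ᵐ ω ∂P, 0 < ξ ω)
    (hu_conc : StrictConcaveOn ℝ (Set.Ici (0:ℝ)) u)
    (hu_deriv : ∀ x : ℝ, 0 < x → HasDerivAt u (u' x) x)
    (hu_deriv2 : ∀ x : ℝ, 0 < x → HasDerivAt u' (u'' x) x)
    (hu'_pos : ∀ x : ℝ, 0 < x → 0 < u' x)
    (hu'_zero : Tendsto u' (nhdsWithin 0 (Set.Ioi 0)) atTop)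
    (hu'_top : Tendsto u' atTop (nhds 0))
    {lam₁ c : ℝ} (hlam₁ : 0 < lam₁) (hc : lam₁ < c)
    (hdom : ∫⁻ ω, ENNReal.ofReal (Iinv u' (lam₁ * ξ ω) * ξ ω) ∂P ≠ ⊤) :
    ContinuousOn (fun lam => ∫⁻ ω, ENNReal.ofReal (Iinv u' (lam * ξ ω) * ξ ω) ∂P)
      (Set.Ici c) := by
  have hIm : Measurable (Iinv u') :=
    Iinv_measurable hu_conc hu_deriv hu_deriv2 hu'_pos hu'_zero hu'_top
  set f : ℝ → ℝ≥0∞ :=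
    fun lam => ∫⁻ ω, ENNReal.ofReal (Iinv u' (lam * ξ ω) * ξ ω) ∂P with hfdef
  intro lam₀ hlam₀
  rw [ContinuousWithinAt]
  refine tendsto_iff_seq_tendsto.mpr fun x hx => ?_
  set x' : ℕ → ℝ := fun n => max (x n) c with hx'def
  have hx'mem : ∀ n, c ≤ x' n := fun n => le_max_right _ _
  have hx0 : Tendsto x atTop (nhds lam₀) := hx.mono_right nhdsWithin_le_nhds
  have hx't : Tendsto x' atTop (nhds lam₀) := by
    have h1 : Tendsto (fun n => max (x n) c) atTop (nhds (max lam₀ c)) :=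
      ((continuous_id.max continuous_const).continuousAt (x := lam₀)).tendsto.comp hx0
    rwa [max_eq_left hlam₀] at h1
  have heq : ∀ᶠ n in atTop, f (x' n) = f (x n) := by
    filter_upwards [hx.eventually eventually_mem_nhdsWithin] with n hn
    simp only [hx'def]
    rw [max_eq_left hn]
  have hmain : Tendsto (fun n => f (x' n)) atTop (nhds (f lam₀)) := by
    simp only [hfdef]
    apply tendsto_lintegral_of_dominated_convergence
      (bound := fun ω => ENNReal.ofReal (Iinv u' (lam₁ * ξ ω) * ξ ω))
    · exact fun n => ((hIm.comp (measurable_const.mul hξmeas)).mul hξmeas).ennreal_ofReal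
    · intro n
      filter_upwards [hξpos] with ω hξω
      apply ENNReal.ofReal_le_ofReal
      have h1 : Iinv u' (x' n * ξ ω) ≤ Iinv u' (lam₁ * ξ ω) := by
        apply Iinv_anti hu_conc hu_deriv hu_deriv2 hu'_zero hu'_top (by positivity)
        nlinarith [hx'mem n]
      exact mul_le_mul_of_nonneg_right h1 hξω.le
    · exact hdom
    · filter_upwards [hξpos] with ω hξω
      have h1 : Tendsto (fun n => x' n * ξ ω) atTop (nhds (lam₀ * ξ ω)) :=
        hx't.mul_const (ξ ω)
      have h2 : ContinuousAt (Iinv u') (lam₀ * ξ ω) :=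
        Iinv_continuousAt hu_conc hu_deriv hu_deriv2 hu'_pos hu'_zero hu'_top
          (by nlinarith [lt_of_lt_of_le hc hlam₀])
      have h3 : Tendsto (fun n => Iinv u' (x' n * ξ ω) * ξ ω) atTop
          (nhds (Iinv u' (lam₀ * ξ ω) * ξ ω)) := (h2.tendsto.comp h1).mul_const (ξ ω)
      exact (ENNReal.continuous_ofReal.continuousAt.tendsto.comp h3)
  exact hmain.congr' heq

end FlagCont

theorem optimal_for_small_budget
    {Ω : Type*} [MeasurableSpace Ω] (P : Measure Ω) [IsProbabilityMeasure P]
    (ξ : Ω → ℝ) (hξmeas : Measurable ξ) (hξpos : ∀ᵐ ω ∂P, 0 < ξ ω)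
    (u u' u'' : ℝ → ℝ) (hu_meas : Measurable u)
    (hu0 : u 0 = 0) (hu_nonneg : ∀ x : ℝ, 0 ≤ x → 0 ≤ u x)
    (hu_mono : StrictMonoOn u (Set.Ici (0:ℝ)))
    (hu_conc : StrictConcaveOn ℝ (Set.Ici (0:ℝ)) u)
    (hu_deriv : ∀ x : ℝ, 0 < x → HasDerivAt u (u' x) x)
    (hu_deriv2 : ∀ x : ℝ, 0 < x → HasDerivAt u' (u'' x) x)
    (hu'_pos : ∀ x : ℝ, 0 < x → 0 < u' x)
    (hu'_zero : Tendsto u' (nhdsWithin 0 (Set.Ioi 0)) atTop)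
    (hu'_top : Tendsto u' atTop (nhds 0))
    (hfin : ∃ a : ℝ, 0 < a ∧ Vval P ξ u a < ⊤)
    :
    ∃ a₀ : ℝ, 0 < a₀ ∧ ∀ a : ℝ, 0 < a → a ≤ a₀ →
      ∃ X : Ω → ℝ, IsOptimal P ξ u a X ∧
        ∀ Y : Ω → ℝ, IsOptimal P ξ u a Y → Y =ᵐ[P] X := by
  obtain ⟨ahat, hahat, hVlt⟩ := hfin
  have hVfin : Vval' P ξ u ahat ≠ ⊤ := hVlt.ne
  set Vr := (Vval' P ξ u ahat).toReal with hVrdef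
  have hVr0 : 0 ≤ Vr := ENNReal.toReal_nonneg
  set L := Vr / ahat with hLdef
  have hL0 : 0 ≤ L := by positivity
  have hIm : Measurable (Iinv u') :=
    Iinv_measurable hu_conc hu_deriv hu_deriv2 hu'_pos hu'_zero hu'_top
  have hfle : ∀ lam : ℝ, L < lam →
      ∫⁻ ω, ENNReal.ofReal (Iinv u' (lam * ξ ω) * ξ ω) ∂P
        ≤ ENNReal.ofReal (Vr / (lam - L)) :=
    fun lam h => fLag_le P hξmeas hξpos hu_meas hu0 hu_mono hu_conc hu_deriv hu_deriv2
      hu'_pos hu'_zero hu'_top hahat hVfin h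
  have hL1fin : ∫⁻ ω, ENNReal.ofReal (Iinv u' ((L+1) * ξ ω) * ξ ω) ∂P ≠ ⊤ :=
    ne_top_of_le_ne_top ENNReal.ofReal_ne_top (hfle (L+1) (by linarith))
  have hcont : ContinuousOn
      (fun lam => ∫⁻ ω, ENNReal.ofReal (Iinv u' (lam * ξ ω) * ξ ω) ∂P)
      (Set.Ici (L+2)) :=
    fLag_continuousOn P hξmeas hξpos hu_conc hu_deriv hu_deriv2 hu'_pos hu'_zero
      hu'_top (by linarith : (0:ℝ) < L+1) (by linarith : L+1 < L+2) hL1fin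
  have hfL2fin : ∫⁻ ω, ENNReal.ofReal (Iinv u' ((L+2) * ξ ω) * ξ ω) ∂P ≠ ⊤ :=
    ne_top_of_le_ne_top ENNReal.ofReal_ne_top (hfle (L+2) (by linarith))
  have hfL2pos : ∫⁻ ω, ENNReal.ofReal (Iinv u' ((L+2) * ξ ω) * ξ ω) ∂P ≠ 0 := by
    intro h0
    have hmeasL2 : Measurable fun ω => ENNReal.ofReal (Iinv u' ((L+2) * ξ ω) * ξ ω) :=
      ((hIm.comp (measurable_const.mul hξmeas)).mul hξmeas).ennreal_ofReal
    rw [lintegral_eq_zero_iff hmeasL2] at h0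
    have hfalse : ∀ᵐ ω ∂P, False := by
      filter_upwards [h0, hξpos] with ω h1 h2
      have hlξ : 0 < (L+2) * ξ ω := by positivity
      obtain ⟨hp, _⟩ := Iinv_spec (u'' := u'') hu_deriv2 hu'_zero hu'_top hlξ
      have hpos : 0 < Iinv u' ((L+2) * ξ ω) * ξ ω := mul_pos hp h2
      simp only [Pi.zero_apply] at h1
      rw [ENNReal.ofReal_eq_zero] at h1
      linarith
    haveI : (MeasureTheory.ae P).NeBot := ae_neBot.mpr (IsProbabilityMeasure.ne_zero P)
    obtain ⟨ω, hω⟩ := hfalse.exists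
    exact hω
  set a₀ : ℝ :=
    min (∫⁻ ω, ENNReal.ofReal (Iinv u' ((L+2) * ξ ω) * ξ ω) ∂P).toReal ahat with ha₀def
  have ha₀pos : 0 < a₀ := lt_min (ENNReal.toReal_pos hfL2pos hfL2fin) hahat
  refine ⟨a₀, ha₀pos, ?_⟩
  intro a ha haa₀
  -- IVT to find the multiplier
  set M : ℝ := max (L+2) (L + Vr/a + 1) with hMdef
  have hM2 : L + 2 ≤ M := le_max_left _ _
  have hfM : ∫⁻ ω, ENNReal.ofReal (Iinv u' (M * ξ ω) * ξ ω) ∂P ≤ ENNReal.ofReal a := by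
    refine le_trans (hfle M (by linarith)) (ENNReal.ofReal_le_ofReal ?_)
    have hML : L + Vr/a + 1 ≤ M := le_max_right _ _
    have hMLpos : 0 < M - L := by linarith
    rw [div_le_iff₀ hMLpos]
    have h1 : Vr / a ≤ M - L - 1 := by linarith
    have h2 : Vr ≤ a * (M - L - 1) := by
      rw [div_le_iff₀ ha] at h1
      linarith
    nlinarith
  have hfa₀ : ENNReal.ofReal a ≤ ∫⁻ ω, ENNReal.ofReal (Iinv u' ((L+2) * ξ ω) * ξ ω) ∂P := by
    calc ENNReal.ofReal a
        ≤ ENNReal.ofReal ((∫⁻ ω, ENNReal.ofReal (Iinv u' ((L+2) * ξ ω) * ξ ω) ∂P).toReal) :=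
          ENNReal.ofReal_le_ofReal (le_trans haa₀ (min_le_left _ _))
      _ = ∫⁻ ω, ENNReal.ofReal (Iinv u' ((L+2) * ξ ω) * ξ ω) ∂P :=
          ENNReal.ofReal_toReal hfL2fin
  have hIVT : ∃ lam ∈ Set.Icc (L+2) M,
      ∫⁻ ω, ENNReal.ofReal (Iinv u' (lam * ξ ω) * ξ ω) ∂P = ENNReal.ofReal a := by
    have hmem : ENNReal.ofReal a ∈
        Set.Icc (∫⁻ ω, ENNReal.ofReal (Iinv u' (M * ξ ω) * ξ ω) ∂P)
          (∫⁻ ω, ENNReal.ofReal (Iinv u' ((L+2) * ξ ω) * ξ ω) ∂P) := ⟨hfM, hfa₀⟩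
    obtain ⟨lam, hlam, hflam⟩ :=
      intermediate_value_Icc' hM2 (hcont.mono Set.Icc_subset_Ici_self) hmem
    exact ⟨lam, hlam, hflam⟩
  obtain ⟨lam, hlamIcc, hflam⟩ := hIVT
  have hlamL : L + 2 ≤ lam := hlamIcc.1
  have hlam0 : 0 < lam := by linarith
  set X : Ω → ℝ := fun ω => Iinv u' (lam * ξ ω) with hXdef
  have hXm : Measurable X := hIm.comp (measurable_const.mul hξmeas)
  have hXspec : ∀ᵐ ω ∂P, 0 < X ω ∧ u' (X ω) = lam * ξ ω := by
    filter_upwards [hξpos] with ω hξω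
    exact Iinv_spec (u'' := u'') hu_deriv2 hu'_zero hu'_top (by positivity)
  have hXnonneg : ∀ᵐ ω ∂P, 0 ≤ X ω :=
    Eventually.of_forall fun ω => Iinv_nonneg u' _
  have hXbud : ∫⁻ ω, ENNReal.ofReal (X ω * ξ ω) ∂P = ENNReal.ofReal a := hflam
  set g : Ω → ℝ := fun ω => u (X ω) - lam * ξ ω * X ω with hgdef
  have hgm : Measurable g := (hu_meas.comp hXm).sub ((measurable_const.mul hξmeas).mul hXm)
  have hg0 : ∀ᵐ ω ∂P, 0 ≤ g ω := by
    filter_upwards [hXspec] with ω h1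
    have := mul_deriv_lt hu_conc hu_deriv hu0 h1.1
    rw [h1.2] at this
    simp only [hgdef]
    nlinarith
  have hsplit : ∀ Z : Ω → ℝ, Measurable Z → (∀ᵐ ω ∂P, 0 ≤ Z ω) →
      (∫⁻ ω, ENNReal.ofReal (Z ω * ξ ω) ∂P = ENNReal.ofReal a) →
      ∫⁻ ω, ENNReal.ofReal (g ω + lam * (Z ω * ξ ω)) ∂P
        = (∫⁻ ω, ENNReal.ofReal (g ω) ∂P) + ENNReal.ofReal lam * ENNReal.ofReal a := by
    intro Z hZm hZpos hZbud
    have hae : ∀ᵐ ω ∂P, ENNReal.ofReal (g ω + lam * (Z ω * ξ ω))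
        = ENNReal.ofReal (g ω) + ENNReal.ofReal (lam * (Z ω * ξ ω)) := by
      filter_upwards [hg0, hZpos, hξpos] with ω h1 h2 h3
      exact ENNReal.ofReal_add h1 (by positivity)
    rw [lintegral_congr_ae hae,
      lintegral_add_right (g := fun ω => ENNReal.ofReal (lam * (Z ω * ξ ω))) _ ((measurable_const.mul (hZm.mul hξmeas)).ennreal_ofReal)]
    congr 1
    simp_rw [ENNReal.ofReal_mul hlam0.le]
    rw [lintegral_const_mul (f := fun ω => ENNReal.ofReal (Z ω * ξ ω)) _ ((hZm.mul hξmeas).ennreal_ofReal), hZbud]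
  have htang : ∀ Z : Ω → ℝ, (∀ᵐ ω ∂P, 0 ≤ Z ω) →
      ∀ᵐ ω ∂P, u (Z ω) ≤ g ω + lam * (Z ω * ξ ω) := by
    intro Z hZpos
    filter_upwards [hZpos, hXspec] with ω h1 h2
    have ht := tangent_le hu_conc hu_deriv h1 h2.1
    rw [h2.2] at ht
    simp only [hgdef]
    nlinarith
  have hEuX : ∫⁻ ω, ENNReal.ofReal (u (X ω)) ∂P
      = (∫⁻ ω, ENNReal.ofReal (g ω) ∂P) + ENNReal.ofReal lam * ENNReal.ofReal a := by
    rw [← hsplit X hXm hXnonneg hXbud]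
    apply lintegral_congr_ae
    apply Eventually.of_forall
    intro ω
    congr 1
    simp only [hgdef]
    ring
  have hopt : ∀ Y : Ω → ℝ, Measurable Y → (∀ᵐ ω ∂P, 0 ≤ Y ω) →
      (∫⁻ ω, ENNReal.ofReal (Y ω * ξ ω) ∂P = ENNReal.ofReal a) →
      ∫⁻ ω, ENNReal.ofReal (u (Y ω)) ∂P ≤ ∫⁻ ω, ENNReal.ofReal (u (X ω)) ∂P := by
    intro Y hYm hYpos hYbud
    calc ∫⁻ ω, ENNReal.ofReal (u (Y ω)) ∂P
        ≤ ∫⁻ ω, ENNReal.ofReal (g ω + lam * (Y ω * ξ ω)) ∂P := by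
          refine lintegral_mono_ae ?_
          filter_upwards [htang Y hYpos] with ω h1
          exact ENNReal.ofReal_le_ofReal h1
      _ = (∫⁻ ω, ENNReal.ofReal (g ω) ∂P) + ENNReal.ofReal lam * ENNReal.ofReal a :=
          hsplit Y hYm hYpos hYbud
      _ = ∫⁻ ω, ENNReal.ofReal (u (X ω)) ∂P := hEuX.symm
  have hfinuX : ∫⁻ ω, ENNReal.ofReal (u (X ω)) ∂P ≠ ⊤ := by
    have h1 : ∫⁻ ω, ENNReal.ofReal (u (X ω)) ∂P ≤ Vval' P ξ u a :=
      le_Vval' P X hXm hXnonneg hXbud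
    have h2 : Vval' P ξ u a ≤ Vval' P ξ u ahat :=
      Vval'_mono P hξmeas hξpos hu_mono ha.le (le_trans haa₀ (min_le_right _ _))
    exact ne_top_of_le_ne_top hVfin (le_trans h1 h2)
  refine ⟨X, ⟨hXm, hXnonneg, hXbud, hopt⟩, ?_⟩
  -- uniqueness
  rintro Y ⟨hYm, hYpos, hYbud, hYdom⟩
  have hEeq : ∫⁻ ω, ENNReal.ofReal (u (Y ω)) ∂P = ∫⁻ ω, ENNReal.ofReal (u (X ω)) ∂P :=
    le_antisymm (hopt Y hYm hYpos hYbud) (hYdom X hXm hXnonneg hXbud)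
  set h : Ω → ℝ := fun ω => g ω + lam * (Y ω * ξ ω) - u (Y ω) with hhdef
  have hhm : Measurable h :=
    (hgm.add (measurable_const.mul (hYm.mul hξmeas))).sub (hu_meas.comp hYm)
  have hh0 : ∀ᵐ ω ∂P, 0 ≤ h ω := by
    filter_upwards [htang Y hYpos] with ω h1
    simp only [hhdef]
    linarith
  have hsub : ∀ᵐ ω ∂P, ENNReal.ofReal (h ω)
      = ENNReal.ofReal (g ω + lam * (Y ω * ξ ω)) - ENNReal.ofReal (u (Y ω)) := by
    filter_upwards [hYpos] with ω h1
    exact ENNReal.ofReal_sub _ (hu_nonneg _ h1)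
  have hintheq : ∫⁻ ω, ENNReal.ofReal (h ω) ∂P = 0 := by
    have hmeasuY : Measurable fun ω => ENNReal.ofReal (u (Y ω)) :=
      (hu_meas.comp hYm).ennreal_ofReal
    rw [lintegral_congr_ae hsub,
      lintegral_sub hmeasuY
        (by rw [hEeq]; exact hfinuX)
        (by
          filter_upwards [htang Y hYpos] with ω h1
          exact ENNReal.ofReal_le_ofReal h1),
      hsplit Y hYm hYpos hYbud, hEeq, hEuX, tsub_self]
  have hzero : ∀ᵐ ω ∂P, ENNReal.ofReal (h ω) = 0 := by
    have := (lintegral_eq_zero_iff hhm.ennreal_ofReal).mp hintheq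
    filter_upwards [this] with ω hω
    simpa using hω
  filter_upwards [hzero, hh0, hXspec, hYpos] with ω h1 h2 h3 h4
  have hh00 : h ω = 0 := by
    rw [ENNReal.ofReal_eq_zero] at h1
    linarith
  by_contra hne
  have ht := tangent_lt hu_conc hu_deriv h4 h3.1 hne
  rw [h3.2] at ht
  simp only [hhdef] at hh00
  simp only [hgdef] at hh00
  nlinarith
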